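/- Base case of the commutation lemma at successor stages: if U := C_S(T) (so EA ⊢ ∀ψ (Box_U ψ ↔ Box_T [1]_S ψ)), then T + Rfn(T) ⊢ [1]_S(Box_U ψ → ψ) for every sentence ψ. -/
import Mathlib


/-- An abstract propositional language with implication and falsum. -/
structure Lang (F : Type) where
  imp : F → F → F
  bot : F

namespace Lang
variable {F : Type} (L : Lang F)
def neg (φ : F) : F := L.imp φ L.bot
def top : F := L.neg L.bot
def conj (φ ψ : F) : F := L.neg (L.imp φ (L.neg ψ))
def iff (φ ψ : F) : F := L.conj (L.imp φ ψ) (L.imp ψ φ)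
end Lang

/-- Classical propositional derivability from a set of axioms `Γ`
(a Hilbert system with modus ponens). -/
inductive Deriv {F : Type} (L : Lang F) (Γ : Set F) : F → Prop
  | hyp {φ} : φ ∈ Γ → Deriv L Γ φ
  | ax1 (φ ψ) : Deriv L Γ (L.imp φ (L.imp ψ φ))
  | ax2 (φ ψ χ) : Deriv L Γ (L.imp (L.imp φ (L.imp ψ χ)) (L.imp (L.imp φ ψ) (L.imp φ χ)))
  | ax3 (φ ψ) : Deriv L Γ (L.imp (L.imp (L.neg φ) (L.neg ψ)) (L.imp ψ φ))
  | mp {φ ψ} : Deriv L Γ (L.imp φ ψ) → Deriv L Γ φ → Deriv L Γ ψ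

namespace Stmt11Aux

variable {F : Type} {L : Lang F} {Γ Δ : Set F} {φ ψ χ : F}

theorem mono (h : Deriv L Γ φ) (hs : Γ ⊆ Δ) : Deriv L Δ φ := by
  induction h with
  | hyp h => exact .hyp (hs h)
  | ax1 a b => exact .ax1 a b
  | ax2 a b c => exact .ax2 a b c
  | ax3 a b => exact .ax3 a b
  | mp _ _ ih1 ih2 => exact ih1.mp ih2

theorem id' : Deriv L Γ (L.imp φ φ) :=
  ((Deriv.ax2 φ (L.imp φ φ) φ).mp (Deriv.ax1 φ (L.imp φ φ))).mp (Deriv.ax1 φ φ)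

theorem ded (h : Deriv L (insert φ Γ) ψ) : Deriv L Γ (L.imp φ ψ) := by
  induction h with
  | hyp h =>
    rcases h with rfl | h
    · exact id'
    · exact (Deriv.ax1 _ _).mp (.hyp h)
  | ax1 a b => exact (Deriv.ax1 _ _).mp (.ax1 a b)
  | ax2 a b c => exact (Deriv.ax1 _ _).mp (.ax2 a b c)
  | ax3 a b => exact (Deriv.ax1 _ _).mp (.ax3 a b)
  | mp _ _ ih1 ih2 => exact ((Deriv.ax2 _ _ _).mp ih1).mp ih2

theorem hyp0 : Deriv L (insert φ Γ) φ := .hyp (Set.mem_insert _ _)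

theorem wk (h : Deriv L Γ ψ) : Deriv L (insert φ Γ) ψ :=
  mono h (Set.subset_insert _ _)

theorem negE (h1 : Deriv L Γ (L.neg φ)) (h2 : Deriv L Γ φ) : Deriv L Γ L.bot :=
  Deriv.mp (show Deriv L Γ (L.imp φ L.bot) from h1) h2

theorem exfalso_imp : Deriv L Γ (L.imp (L.neg φ) (L.imp φ ψ)) := by
  apply ded
  exact (Deriv.ax3 ψ φ).mp ((Deriv.ax1 _ _).mp hyp0)

theorem peirce' : Deriv L Γ (L.imp (L.imp (L.neg φ) φ) φ) := by
  apply ded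
  have h1 : Deriv L (insert (L.imp (L.neg φ) φ) Γ)
      (L.imp (L.neg φ) (L.neg (L.imp (L.neg φ) φ))) := by
    apply ded
    show Deriv L _ (L.imp (L.imp (L.neg φ) φ) L.bot)
    apply ded
    exact negE (wk hyp0) (hyp0.mp (wk hyp0))
  exact ((Deriv.ax3 _ _).mp h1).mp hyp0

theorem dne (h : Deriv L Γ (L.neg (L.neg φ))) : Deriv L Γ φ :=
  peirce'.mp (exfalso_imp.mp h)

theorem imp_trans (h1 : Deriv L Γ (L.imp φ ψ)) (h2 : Deriv L Γ (L.imp ψ χ)) :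
    Deriv L Γ (L.imp φ χ) := by
  apply ded
  exact (wk h2).mp ((wk h1).mp hyp0)

theorem cases_on (h1 : Deriv L Γ (L.imp φ χ)) (h2 : Deriv L Γ (L.imp (L.neg φ) χ)) :
    Deriv L Γ χ := by
  apply dne
  show Deriv L Γ (L.imp (L.neg χ) L.bot)
  apply ded
  have hnφ : Deriv L (insert (L.neg χ) Γ) (L.neg φ) := by
    show Deriv L _ (L.imp φ L.bot)
    apply ded
    exact negE (wk hyp0) ((wk (wk h1)).mp hyp0)
  exact negE hyp0 ((wk h2).mp hnφ)

theorem conj_left (h : Deriv L Γ (L.conj φ ψ)) : Deriv L Γ φ := by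
  apply dne
  show Deriv L Γ (L.imp (L.neg φ) L.bot)
  apply ded
  exact negE (wk h) (exfalso_imp.mp hyp0)

end Stmt11Aux

/-- The local reflection schema for a provability predicate `Bx`. -/
def RfnSet {F : Type} (L : Lang F) (Bx : F → F) : Set F := {χ | ∃ ψ, χ = L.imp (Bx ψ) ψ}

/-- Base case of the commutation lemma at successor stages.
If `U := C_S(T)`, so that `EA ⊢ Box_U ψ ↔ Box_T [1]_S ψ` for every `ψ`, then
`T + Rfn(T) ⊢ [1]_S(Box_U ψ → ψ)` for every sentence `ψ`. Here `B = [1]_S`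
satisfies the Löb conditions, and `¬Box_U ψ`, being `Π₁`, satisfies provable
`Σ₂`-completeness for `B`. -/
theorem stmt11 {F : Type} (L : Lang F) (EA S T : Set F) (B BoxT BoxU : F → F)
    (hExtT : ∀ φ, Deriv L EA φ → Deriv L T φ)
    (agree : ∀ ψ, Deriv L EA (L.iff (BoxU ψ) (BoxT (B ψ))))
    (necT : ∀ φ, Deriv L EA φ → Deriv L EA (BoxT φ))
    (distT : ∀ φ ψ, Deriv L EA (L.imp (BoxT (L.imp φ ψ)) (L.imp (BoxT φ) (BoxT ψ))))
    (necB : ∀ φ, Deriv L S φ → Deriv L EA (B φ))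
    (distB : ∀ φ ψ, Deriv L EA (L.imp (B (L.imp φ ψ)) (L.imp (B φ) (B ψ))))
    (compl : ∀ ψ, Deriv L EA (L.imp (L.neg (BoxU ψ)) (B (L.neg (BoxU ψ))))) :
    ∀ ψ, Deriv L (T ∪ RfnSet L BoxT) (B (L.imp (BoxU ψ) ψ)) := by
  intro ψ
  open Stmt11Aux in
  set Γ := T ∪ RfnSet L BoxT with hΓ
  have toΓ : ∀ φ, Deriv L EA φ → Deriv L Γ φ := fun φ h =>
    mono (hExtT φ h) Set.subset_union_left
  have a1 : Deriv L Γ (L.imp (BoxU ψ) (BoxT (B ψ))) := conj_left (toΓ _ (agree ψ))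
  have a2 : Deriv L Γ (L.imp (BoxT (B ψ)) (B ψ)) :=
    .hyp (Or.inr ⟨B ψ, rfl⟩)
  have a3 : Deriv L Γ (L.imp (B ψ) (B (L.imp (BoxU ψ) ψ))) := by
    apply toΓ
    exact (distB _ _).mp (necB _ (Deriv.ax1 ψ (BoxU ψ)))
  have pos : Deriv L Γ (L.imp (BoxU ψ) (B (L.imp (BoxU ψ) ψ))) :=
    imp_trans a1 (imp_trans a2 a3)
  have b1 : Deriv L Γ (L.imp (B (L.neg (BoxU ψ))) (B (L.imp (BoxU ψ) ψ))) := by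
    apply toΓ
    exact (distB _ _).mp (necB _ exfalso_imp)
  have neg : Deriv L Γ (L.imp (L.neg (BoxU ψ)) (B (L.imp (BoxU ψ) ψ))) :=
    imp_trans (toΓ _ (compl ψ)) b1
  exact cases_on pos neg
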